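/- For every nontrivial real Banach space X (pointed at its origin), the set [Lip₀(X) \ (PNA(X) ∪ LDirA(X))] ∪ {0} contains an isometric copy of ℓ∞: there exists a linear map T : ℓ∞ → Lip₀(X) such that ‖T a‖ = ‖a‖_∞ for every a ∈ ℓ∞, and for every nonzero a ∈ ℓ∞, the function T a neither attains its pointwise norm nor attains its norm locally directionally. -/

import Mathlib

open Filter Set
open scoped ZeroAtInfty ENNReal NNReal

/-- The optimal Lipschitz constant (Lipschitz norm) of `f : M → ℝ`. -/
noncomputable def lipNorm {M : Type*} [MetricSpace M] (f : M → ℝ) : ℝ :=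
  sSup {r : ℝ | ∃ p q : M, p ≠ q ∧ r = |f p - f q| / dist p q}

/-- `f` belongs to `Lip₀(M)`: it is Lipschitz and vanishes at the base point. -/
def MemLip0 {M : Type*} [MetricSpace M] (base : M) (f : M → ℝ) : Prop :=
  f base = 0 ∧ ∃ K : ℝ≥0, LipschitzWith K f

/-- `f` strongly attains its (Lipschitz) norm. -/
def StronglyAttains {M : Type*} [MetricSpace M] (f : M → ℝ) : Prop :=
  ∃ p q : M, p ≠ q ∧ |f p - f q| = lipNorm f * dist p q

/-- `f` attains its pointwise norm. -/
def PointwiseAttains {M : Type*} [MetricSpace M] (f : M → ℝ) : Prop :=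
  ∃ p : M, sSup {r : ℝ | ∃ q : M, q ≠ p ∧ r = |f p - f q| / dist p q} = lipNorm f

/-- `f` attains its norm through a derivative: for some `x` and unit direction `e`, the
two-sided directional derivative exists and has modulus `‖f‖`. -/
def DerAttains {X : Type*} [NormedAddCommGroup X] [NormedSpace ℝ X] (f : X → ℝ) : Prop :=
  ∃ x e : X, ‖e‖ = 1 ∧ ∃ L : ℝ,
    Filter.Tendsto (fun t : ℝ => (f (x + t • e) - f x) / t)
      (nhdsWithin (0 : ℝ) {(0 : ℝ)}ᶜ) (nhds L) ∧
    |L| = lipNorm f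

/-- `f` attains its norm locally directionally at a point `x̄` in the direction `u`
toward `z`. -/
def LocDirAttains {X : Type*} [NormedAddCommGroup X] [NormedSpace ℝ X] (f : X → ℝ) : Prop :=
  ∃ (xbar u : X) (z : ℝ), ‖u‖ = 1 ∧ |z| = lipNorm f ∧
    ∃ p q : ℕ → X, (∀ n, p n ≠ q n) ∧
      Filter.Tendsto (fun n => (f (q n) - f (p n)) / ‖q n - p n‖) Filter.atTop (nhds z) ∧
      Filter.Tendsto (fun n => ‖p n - q n‖⁻¹ • (p n - q n)) Filter.atTop (nhds u) ∧
      Filter.Tendsto p Filter.atTop (nhds xbar) ∧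
      Filter.Tendsto q Filter.atTop (nhds xbar)

section LinftyAux

noncomputable def blk (n : ℕ) : ℝ := 4 ^ (n + 2)

lemma blk_pos (n : ℕ) : 0 < blk n := by unfold blk; positivity

lemma blk_mono {m n : ℕ} (h : m ≤ n) : blk m ≤ blk n := by
  unfold blk
  exact pow_le_pow_right₀ (by norm_num) (by omega)

lemma blk_succ (n : ℕ) : blk n + 1 ≤ blk (n + 1) := by
  unfold blk
  have h : (1:ℝ) ≤ 4 ^ (n + 2) := one_le_pow₀ (by norm_num)
  have : (4:ℝ) ^ (n + 1 + 2) = 4 * 4 ^ (n + 2) := by ring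
  nlinarith

lemma nat_add_one_le_pow (n : ℕ) : (n : ℝ) + 1 ≤ 4 ^ (n + 1) := by
  induction n with
  | zero => norm_num
  | succ n ih =>
    have : (4:ℝ) ^ (n + 1 + 1) = 4 * 4 ^ (n + 1) := by ring
    push_cast
    nlinarith

lemma nat_le_blk (n : ℕ) : (n : ℝ) ≤ blk n := by
  have h := nat_add_one_le_pow n
  have h2 : (4:ℝ) ^ (n+1) ≤ 4 ^ (n+2) := pow_le_pow_right₀ (by norm_num) (by omega)
  unfold blk
  linarith

noncomputable def ramp (n : ℕ) (x : ℝ) : ℝ := min (max x (blk n)) (blk n + 1) - blk n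

lemma ramp_nonneg (n : ℕ) (x : ℝ) : 0 ≤ ramp n x := by
  unfold ramp
  have h1 : blk n ≤ max x (blk n) := le_max_right _ _
  have h2 : blk n ≤ blk n + 1 := by linarith
  have := le_min h1 h2
  linarith

lemma ramp_le_one (n : ℕ) (x : ℝ) : ramp n x ≤ 1 := by
  unfold ramp
  have := min_le_right (max x (blk n)) (blk n + 1)
  linarith

lemma ramp_mono (n : ℕ) {x y : ℝ} (h : x ≤ y) : ramp n x ≤ ramp n y := by
  unfold ramp
  have := min_le_min (max_le_max_right (blk n) h) (le_refl (blk n + 1))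
  linarith

lemma ramp_eq_zero (n : ℕ) {x : ℝ} (h : x ≤ blk n) : ramp n x = 0 := by
  unfold ramp
  rw [max_eq_right h, min_eq_left (by linarith)]
  ring

lemma ramp_eq_one (n : ℕ) {x : ℝ} (h : blk n + 1 ≤ x) : ramp n x = 1 := by
  unfold ramp
  rw [max_eq_left (by linarith), min_eq_right h]
  ring

lemma ramp_as_min (n : ℕ) (x : ℝ) :
    ramp n x = min x (blk n + 1) - min x (blk n) := by
  rcases le_total x (blk n) with h | h
  · rw [ramp_eq_zero n h, min_eq_left h, min_eq_left (by linarith)]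
    ring
  · rcases le_total x (blk n + 1) with h2 | h2
    · unfold ramp
      rw [max_eq_left h, min_eq_left h2, min_eq_right h]
    · rw [ramp_eq_one n h2, min_eq_right h2, min_eq_right h]
      ring

lemma min_sub_min_le {t s : ℝ} (c : ℝ) (h : t ≤ s) : min s c - min t c ≤ s - t := by
  rcases le_total s c with h1 | h1 <;> rcases le_total t c with h2 | h2 <;>
    simp [min_eq_left, min_eq_right, h1, h2] <;> linarith

lemma sum_ramp_le (N : ℕ) : ∀ {t s : ℝ}, t ≤ s →
    ∑ n ∈ Finset.range N, (ramp n s - ramp n t) ≤ s - t := by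
  induction N with
  | zero => intro t s h; simp; linarith
  | succ N ih =>
    intro t s hts
    rw [Finset.sum_range_succ]
    have key : ∀ n ∈ Finset.range N, ramp n s - ramp n t
        = ramp n (min s (blk N)) - ramp n (min t (blk N)) := by
      intro n hn
      have hn' : n + 1 ≤ N := Finset.mem_range.1 hn
      have hb : blk n + 1 ≤ blk N := le_trans (blk_succ n) (blk_mono hn')
      have e : ∀ x : ℝ, ramp n (min x (blk N)) = ramp n x := by
        intro x
        rcases le_total x (blk N) with h | h
        · rw [min_eq_left h]
        · rw [min_eq_right h, ramp_eq_one n hb, ramp_eq_one n (le_trans hb h)]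
      rw [e s, e t]
    rw [Finset.sum_congr rfl key]
    have h2 := ih (min_le_min_right (blk N) hts)
    have h3 : ramp N s - ramp N t ≤ (s - t) - (min s (blk N) - min t (blk N)) := by
      rw [ramp_as_min, ramp_as_min]
      have := min_sub_min_le (blk N + 1) hts
      linarith
    linarith

noncomputable def wt (n : ℕ) : ℝ :=
  ((Nat.unpair n).2 + 1) / ((Nat.unpair n).2 + 2)

lemma wt_nonneg (n : ℕ) : 0 ≤ wt n := by unfold wt; positivity

lemma wt_le_one (n : ℕ) : wt n ≤ 1 := by
  unfold wt
  rw [div_le_one (by positivity)]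
  linarith

lemma wt_le {n N : ℕ} (h : n ≤ N) : wt n ≤ ((N:ℝ) + 1) / ((N:ℝ) + 2) := by
  unfold wt
  have hm : ((Nat.unpair n).2 : ℝ) ≤ (N : ℝ) := by
    exact_mod_cast le_trans (Nat.unpair_right_le n) h
  rw [div_le_div_iff₀ (by positivity) (by positivity)]
  nlinarith

noncomputable def gg (b : ℕ → ℝ) (t : ℝ) : ℝ :=
  ∑ n ∈ Finset.range ⌈|t|⌉₊, b (Nat.unpair n).1 * wt n * ramp n t

lemma gg_eq (b : ℕ → ℝ) (t : ℝ) {N : ℕ} (hN : ⌈|t|⌉₊ ≤ N) :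
    gg b t = ∑ n ∈ Finset.range N, b (Nat.unpair n).1 * wt n * ramp n t := by
  apply Finset.sum_subset (Finset.range_subset_range.2 hN)
  intro n _ hn
  rw [Finset.mem_range, not_lt] at hn
  have ht : t ≤ blk n := by
    have h1 : t ≤ |t| := le_abs_self t
    have h2 : |t| ≤ (⌈|t|⌉₊ : ℝ) := Nat.le_ceil _
    have h3 : ((⌈|t|⌉₊ : ℕ) : ℝ) ≤ (n : ℝ) := by exact_mod_cast hn
    linarith [nat_le_blk n]
  rw [ramp_eq_zero n ht, mul_zero]

lemma geo_eq : ∀ {A B : ℕ}, A ≤ B →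
    ∑ n ∈ Finset.Ico A B, (1/4:ℝ)^n = (4/3) * ((1/4)^A - (1/4)^B) := by
  intro A B h
  induction B, h using Nat.le_induction with
  | base => simp
  | succ B hAB ih =>
    rw [Finset.sum_Ico_succ_top hAB, ih, pow_succ]
    ring

lemma geo_le {A B : ℕ} : ∑ n ∈ Finset.Ico A B, (1/4:ℝ)^n ≤ (4/3) * (1/4)^A := by
  rcases le_total A B with h | h
  · rw [geo_eq h]
    have : (0:ℝ) ≤ (1/4:ℝ)^B := by positivity
    nlinarith [this]
  · rcases lt_or_eq_of_le h with h | h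
    · rw [Finset.Ico_eq_empty (by omega)]
      simp
    · subst h
      rw [geo_eq le_rfl]
      have : (0:ℝ) ≤ (1/4:ℝ)^B := by positivity
      nlinarith [this]

lemma tail_term {N n : ℕ} {t s : ℝ} (hn : N + 1 ≤ n) (hts : t ≤ s) (ht : t ≤ blk N) :
    ramp n s - ramp n t ≤ (4/3) * (s - t) * (1/4:ℝ)^(n+2) := by
  have hst : 0 ≤ s - t := sub_nonneg.2 hts
  rcases le_total s (blk n) with h | h
  · rw [ramp_eq_zero n h, ramp_eq_zero n (le_trans hts h)]
    have : (0:ℝ) ≤ (1/4:ℝ)^(n+2) := by positivity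
    nlinarith
  · have h1 : blk N ≤ (4:ℝ)^(n+1) := by
      unfold blk
      exact pow_le_pow_right₀ (by norm_num) (by omega)
    have h2 : blk n = 4 * (4:ℝ)^(n+1) := by
      unfold blk
      ring
    have h3x : 3 * (4:ℝ)^(n+1) ≤ s - t := by linarith
    have hq : (0:ℝ) < (1/4:ℝ)^(n+2) := by positivity
    have hinv : (1/4:ℝ)^(n+2) * ((4:ℝ)^(n+2)) = 1 := by
      rw [← mul_pow]; norm_num
    have h4 : (4:ℝ)^(n+2) = 4 * (4:ℝ)^(n+1) := by ring
    have hΔ : ramp n s - ramp n t ≤ 1 := by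
      have := ramp_le_one n s
      have := ramp_nonneg n t
      linarith
    have : (1:ℝ) ≤ (4/3) * (s - t) * (1/4:ℝ)^(n+2) := by
      nlinarith [mul_nonneg (sub_nonneg.2 h3x) (le_of_lt hq)]
    linarith

lemma master_core (b : ℕ → ℝ) (C : ℝ) (hb : ∀ k, |b k| ≤ C) (N : ℕ) {t s : ℝ}
    (hts : t ≤ s) (ht : t ≤ blk N) :
    |gg b s - gg b t| ≤ (1 - 1/(2*((N:ℝ)+2))) * C * (s - t) := by
  have hC : 0 ≤ C := le_trans (abs_nonneg _) (hb 0)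
  have hst : 0 ≤ s - t := sub_nonneg.2 hts
  set B := max (max ⌈|t|⌉₊ ⌈|s|⌉₊) (N+1) with hB
  have hBt : ⌈|t|⌉₊ ≤ B := le_trans (le_max_left _ _) (le_max_left _ _)
  have hBs : ⌈|s|⌉₊ ≤ B := le_trans (le_max_right _ _) (le_max_left _ _)
  have hNB : N + 1 ≤ B := le_max_right _ _
  set W : ℝ := ((N:ℝ) + 1) / ((N:ℝ) + 2) with hW
  have hW0 : 0 ≤ W := by positivity
  rw [gg_eq b s hBs, gg_eq b t hBt, ← Finset.sum_sub_distrib]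
  have hterm : ∀ n ∈ Finset.range B,
      b (Nat.unpair n).1 * wt n * ramp n s - b (Nat.unpair n).1 * wt n * ramp n t
      = (b (Nat.unpair n).1 * wt n) * (ramp n s - ramp n t) := by
    intro n _; ring
  rw [Finset.sum_congr rfl hterm]
  have habs : |∑ n ∈ Finset.range B, (b (Nat.unpair n).1 * wt n) * (ramp n s - ramp n t)|
      ≤ ∑ n ∈ Finset.range B, |b (Nat.unpair n).1| * wt n * (ramp n s - ramp n t) := by
    refine le_trans (Finset.abs_sum_le_sum_abs _ _) (Finset.sum_le_sum ?_)
    intro n _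
    rw [abs_mul, abs_mul, abs_of_nonneg (wt_nonneg n),
      abs_of_nonneg (sub_nonneg.2 (ramp_mono n hts)), mul_assoc]
  refine le_trans habs ?_
  rw [Finset.range_eq_Ico, ← Finset.sum_Ico_consecutive _ (Nat.zero_le (N+1)) hNB]
  have hhead : ∑ n ∈ Finset.Ico 0 (N+1), |b (Nat.unpair n).1| * wt n * (ramp n s - ramp n t)
      ≤ (C * W) * (s - t) := by
    have h1 : ∀ n ∈ Finset.Ico 0 (N+1),
        |b (Nat.unpair n).1| * wt n * (ramp n s - ramp n t)
        ≤ (C * W) * (ramp n s - ramp n t) := by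
      intro n hn
      have hnN : n ≤ N := by
        have := (Finset.mem_Ico.1 hn).2; omega
      have h2 : |b (Nat.unpair n).1| * wt n ≤ C * W :=
        mul_le_mul (hb _) (wt_le hnN) (wt_nonneg n) hC
      exact mul_le_mul_of_nonneg_right h2 (sub_nonneg.2 (ramp_mono n hts))
    refine le_trans (Finset.sum_le_sum h1) ?_
    rw [← Finset.mul_sum]
    have h3 : ∑ n ∈ Finset.Ico 0 (N+1), (ramp n s - ramp n t) ≤ s - t := by
      rw [← Finset.range_eq_Ico]
      exact sum_ramp_le (N+1) hts
    exact mul_le_mul_of_nonneg_left h3 (mul_nonneg hC hW0)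
  have htail : ∑ n ∈ Finset.Ico (N+1) B, |b (Nat.unpair n).1| * wt n * (ramp n s - ramp n t)
      ≤ (C * ((4/3) * (s - t))) * ((4/3) * (1/4:ℝ)^(N+3)) := by
    have h1 : ∀ n ∈ Finset.Ico (N+1) B,
        |b (Nat.unpair n).1| * wt n * (ramp n s - ramp n t)
        ≤ (C * ((4/3) * (s - t))) * (1/4:ℝ)^(n+2) := by
      intro n hn
      have hnN : N + 1 ≤ n := (Finset.mem_Ico.1 hn).1
      have h2 : |b (Nat.unpair n).1| * wt n ≤ C :=
        le_trans (mul_le_mul (hb _) (wt_le_one n) (wt_nonneg n) hC) (by linarith)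
      have h3 := tail_term hnN hts ht
      calc |b (Nat.unpair n).1| * wt n * (ramp n s - ramp n t)
          ≤ C * ((4/3) * (s - t) * (1/4:ℝ)^(n+2)) := by
            apply mul_le_mul h2 h3 (sub_nonneg.2 (ramp_mono n hts)) hC
        _ = (C * ((4/3) * (s - t))) * (1/4:ℝ)^(n+2) := by ring
    refine le_trans (Finset.sum_le_sum h1) ?_
    rw [← Finset.mul_sum]
    have h4 : ∑ n ∈ Finset.Ico (N+1) B, (1/4:ℝ)^(n+2) ≤ (4/3) * (1/4:ℝ)^(N+3) := by
      have h5 : ∀ n ∈ Finset.Ico (N+1) B, (1/4:ℝ)^(n+2) = (1/4:ℝ)^n * (1/16) := by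
        intro n _
        rw [pow_add]; norm_num
      rw [Finset.sum_congr rfl h5, ← Finset.sum_mul]
      have h6 : ((1/4:ℝ))^(N+3) = (1/4:ℝ)^(N+1) * (1/16) := by
        rw [show N+3 = N+1+2 from rfl, pow_add]; norm_num
      rw [h6]
      nlinarith [geo_le (A := N+1) (B := B)]
    exact mul_le_mul_of_nonneg_left h4 (by positivity)
  have hq : (16/9:ℝ) * (1/4:ℝ)^(N+3) ≤ 1/(2*((N:ℝ)+2)) := by
    have hx : ((N:ℝ)+2) ≤ (4:ℝ)^(N+2) := by
      have h := nat_add_one_le_pow (N+1)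
      rw [show N+1+1 = N+2 from rfl] at h
      push_cast at h
      linarith
    have hxpos : (0:ℝ) < (4:ℝ)^(N+2) := by positivity
    have hinv : (1/4:ℝ)^(N+3) * ((4:ℝ)^(N+3)) = 1 := by
      rw [← mul_pow]; norm_num
    have h43 : (4:ℝ)^(N+3) = 4 * (4:ℝ)^(N+2) := by ring
    have hqpos : (0:ℝ) < (1/4:ℝ)^(N+3) := by positivity
    rw [le_div_iff₀ (by positivity)]
    nlinarith [mul_le_mul_of_nonneg_left hx (le_of_lt hqpos)]
  have hWid : W = 1 - 1/((N:ℝ)+2) := by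
    rw [hW]; field_simp; ring
  have hfinal : (C * W) * (s - t) + (C * ((4/3) * (s - t))) * ((4/3) * (1/4:ℝ)^(N+3))
      ≤ (1 - 1/(2*((N:ℝ)+2))) * C * (s - t) := by
    have hid : 1/((N:ℝ)+2) = 2 * (1/(2*((N:ℝ)+2))) := by
      field_simp
    have hcomb : W + (16/9) * (1/4:ℝ)^(N+3) ≤ 1 - 1/(2*((N:ℝ)+2)) := by
      rw [hWid]
      linarith [hq, hid.ge, hid.le]
    nlinarith [mul_le_mul_of_nonneg_left hcomb (mul_nonneg hC hst)]
  linarith [hhead, htail]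

lemma master (b : ℕ → ℝ) (C : ℝ) (hb : ∀ k, |b k| ≤ C) (N : ℕ) {t s : ℝ}
    (h : min t s ≤ blk N) :
    |gg b s - gg b t| ≤ (1 - 1/(2*((N:ℝ)+2))) * C * |s - t| := by
  rcases le_total t s with hts | hts
  · rw [abs_of_nonneg (sub_nonneg.2 hts)]
    exact master_core b C hb N hts (by rwa [min_eq_left hts] at h)
  · rw [abs_sub_comm (gg b s), abs_sub_comm s t, abs_of_nonneg (sub_nonneg.2 hts)]
    exact master_core b C hb N hts (by rwa [min_eq_right hts] at h)

lemma exists_blk_ge (t : ℝ) : ∃ N : ℕ, t ≤ blk N := by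
  refine ⟨⌈|t|⌉₊, ?_⟩
  have h1 : t ≤ |t| := le_abs_self t
  have h2 : |t| ≤ (⌈|t|⌉₊ : ℝ) := Nat.le_ceil _
  linarith [nat_le_blk ⌈|t|⌉₊]

lemma gg_lip (b : ℕ → ℝ) (C : ℝ) (hb : ∀ k, |b k| ≤ C) (t s : ℝ) :
    |gg b s - gg b t| ≤ C * |s - t| := by
  have hC : 0 ≤ C := le_trans (abs_nonneg _) (hb 0)
  obtain ⟨N, hN⟩ := exists_blk_ge (min t s)
  have h := master b C hb N hN
  have hδ : 0 < 1/(2*((N:ℝ)+2)) := by positivity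
  nlinarith [abs_nonneg (s - t), mul_nonneg hC (abs_nonneg (s - t))]

lemma gg_zero (b : ℕ → ℝ) : gg b 0 = 0 := by
  simp [gg]

lemma gg_jump (b : ℕ → ℝ) (n : ℕ) :
    gg b (blk n + 1) - gg b (blk n) = b (Nat.unpair n).1 * wt n := by
  set B := max ⌈|blk n + 1|⌉₊ (max ⌈|blk n|⌉₊ (n+1)) with hBdef
  have hB1 : ⌈|blk n + 1|⌉₊ ≤ B := le_max_left _ _
  have hB2 : ⌈|blk n|⌉₊ ≤ B := le_trans (le_max_left _ _) (le_max_right _ _)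
  have hBn : n + 1 ≤ B := le_trans (le_max_right _ _) (le_max_right _ _)
  rw [gg_eq b _ hB1, gg_eq b _ hB2, ← Finset.sum_sub_distrib]
  rw [Finset.sum_eq_single n]
  · rw [ramp_eq_one n le_rfl, ramp_eq_zero n le_rfl]
    ring
  · intro j hj hjn
    rcases lt_or_gt_of_ne hjn with h | h
    · have h1 : blk j + 1 ≤ blk n := le_trans (blk_succ j) (blk_mono h)
      rw [ramp_eq_one j (by linarith), ramp_eq_one j h1]
      ring
    · have h1 : blk n + 1 ≤ blk j := le_trans (blk_succ n) (blk_mono h)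
      rw [ramp_eq_zero j (le_trans (by linarith [blk_pos n]) h1),
        ramp_eq_zero j (by linarith [blk_pos n])]
      ring
  · intro hn
    exact absurd (Finset.mem_range.2 (by omega)) hn

open Filter in
lemma wt_tendsto : Filter.Tendsto (fun m : ℕ => ((m:ℝ)+1)/((m:ℝ)+2)) atTop (nhds 1) := by
  have h2 : Filter.Tendsto (fun m : ℕ => (m:ℝ)+2) atTop atTop :=
    tendsto_atTop_add_const_right _ 2 tendsto_natCast_atTop_atTop
  have h0 : Filter.Tendsto (fun m : ℕ => 1/((m:ℝ)+2)) atTop (nhds 0) := by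
    simpa [one_div, Pi.inv_def] using h2.inv_tendsto_atTop
  have h1 : Filter.Tendsto (fun m : ℕ => 1 - 1/((m:ℝ)+2)) atTop (nhds (1 - 0)) :=
    tendsto_const_nhds.sub h0
  rw [sub_zero] at h1
  refine h1.congr fun m => ?_
  field_simp
  ring

end LinftyAux

/-- For every nontrivial real Banach space `X`, the set
`[Lip₀(X) \ (PNA(X) ∪ LDirA(X))] ∪ {0}` contains an isometric copy of `ℓ∞`. -/
theorem linfty_outside_PNA_and_LDirA {X : Type*} [NormedAddCommGroup X] [NormedSpace ℝ X]
    [CompleteSpace X] [Nontrivial X] :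
    ∃ T : lp (fun _ : ℕ => ℝ) ⊤ →ₗ[ℝ] (X → ℝ),
      ∀ a : lp (fun _ : ℕ => ℝ) ⊤,
        MemLip0 (0 : X) (T a) ∧ lipNorm (T a) = ‖a‖ ∧
        (a ≠ 0 → ¬ PointwiseAttains (T a) ∧ ¬ LocDirAttains (T a)) := by
  obtain ⟨v, hv⟩ := exists_ne (0 : X)
  have hvn : ‖v‖ ≠ 0 := norm_ne_zero_iff.2 hv
  set x₀ : X := ‖v‖⁻¹ • v with hx₀def
  have hx₀ : ‖x₀‖ = 1 := by
    rw [hx₀def, norm_smul, norm_inv, norm_norm, inv_mul_cancel₀ hvn]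
  have hx₀ne : x₀ ≠ 0 := by
    intro h; rw [h, norm_zero] at hx₀; norm_num at hx₀
  obtain ⟨φ, hφ1, hφ2⟩ := exists_dual_vector ℝ x₀ (norm_ne_zero_iff.2 hx₀ne)
  have hφx₀ : φ x₀ = 1 := by rw [hφ2, hx₀]; norm_num
  have hφlip : ∀ p q : X, |φ p - φ q| ≤ dist p q := by
    intro p q
    have h := φ.le_opNorm (p - q)
    rw [hφ1, one_mul] at h
    rw [dist_eq_norm]
    calc |φ p - φ q| = ‖φ (p - q)‖ := by rw [map_sub]; rfl
      _ ≤ ‖p - q‖ := h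
  refine ⟨{ toFun := fun a x => gg (fun k => a k) (φ x),
            map_add' := ?_, map_smul' := ?_ }, ?_⟩
  · intro a c
    funext x
    simp only [gg, lp.coeFn_add, Pi.add_apply]
    rw [← Finset.sum_add_distrib]
    exact Finset.sum_congr rfl fun n _ => by ring
  · intro c a
    funext x
    simp only [gg, lp.coeFn_smul, Pi.smul_apply, smul_eq_mul, RingHom.id_apply]
    rw [Finset.mul_sum]
    exact Finset.sum_congr rfl fun n _ => by ring
  intro a
  simp only [LinearMap.coe_mk, AddHom.coe_mk]
  set b : ℕ → ℝ := fun k => a k with hbdef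
  set f : X → ℝ := fun x => gg b (φ x) with hfdef
  have hb : ∀ k, |b k| ≤ ‖a‖ := by
    intro k
    have h := lp.norm_apply_le_norm ENNReal.top_ne_zero a k
    rw [Real.norm_eq_abs] at h
    exact h
  have hC : (0:ℝ) ≤ ‖a‖ := norm_nonneg a
  -- Lipschitz bound between any two points of X
  have flip : ∀ p q : X, |f p - f q| ≤ ‖a‖ * dist p q := by
    intro p q
    calc |f p - f q| ≤ ‖a‖ * |φ p - φ q| := gg_lip b ‖a‖ hb (φ q) (φ p)
      _ ≤ ‖a‖ * dist p q := mul_le_mul_of_nonneg_left (hφlip p q) hC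
  -- the Lipschitz norm equals ‖a‖
  have hub : ∀ r ∈ {r : ℝ | ∃ p q : X, p ≠ q ∧ r = |f p - f q| / dist p q}, r ≤ ‖a‖ := by
    rintro r ⟨p, q, hpq, rfl⟩
    rw [div_le_iff₀ (dist_pos.2 hpq)]
    exact flip p q
  have hupper : lipNorm f ≤ ‖a‖ := Real.sSup_le hub hC
  have hbdd : BddAbove {r : ℝ | ∃ p q : X, p ≠ q ∧ r = |f p - f q| / dist p q} :=
    ⟨‖a‖, fun r hr => hub r hr⟩
  have helem : ∀ k m : ℕ, |a k| * wt (Nat.pair k m) ≤ lipNorm f := by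
    intro k m
    set n := Nat.pair k m with hn
    set p : X := blk n • x₀ with hp
    set q : X := (blk n + 1) • x₀ with hq
    have hpqne : p ≠ q := by
      intro h
      have : p - q = 0 := sub_eq_zero.2 h
      rw [hp, hq, ← sub_smul] at this
      have h2 : blk n - (blk n + 1) = -1 := by ring
      rw [h2] at this
      exact hx₀ne (by simpa using (smul_eq_zero.1 this).resolve_left (by norm_num))
    have hdist : dist p q = 1 := by
      rw [dist_eq_norm, hp, hq, ← sub_smul, norm_smul, hx₀]
      norm_num
    have hφp : φ p = blk n := by rw [hp, map_smul, smul_eq_mul, hφx₀, mul_one]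
    have hφq : φ q = blk n + 1 := by rw [hq, map_smul, smul_eq_mul, hφx₀, mul_one]
    have hval : |f p - f q| / dist p q = |a k| * wt n := by
      rw [hdist, div_one, hfdef]
      show |gg b (φ p) - gg b (φ q)| = |a k| * wt n
      rw [hφp, hφq, abs_sub_comm, gg_jump b n, abs_mul, abs_of_nonneg (wt_nonneg n),
        hn, Nat.unpair_pair]
    have hmem : |a k| * wt n ∈ {r : ℝ | ∃ p q : X, p ≠ q ∧ r = |f p - f q| / dist p q} :=
      ⟨p, q, hpqne, hval.symm⟩
    exact le_csSup hbdd hmem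
  have hlower : ‖a‖ ≤ lipNorm f := by
    rw [lp.norm_eq_ciSup]
    refine ciSup_le fun k => ?_
    have hlim : Filter.Tendsto (fun m : ℕ => |a k| * (((m:ℝ)+1)/((m:ℝ)+2))) atTop
        (nhds (|a k| * 1)) := wt_tendsto.const_mul _
    rw [mul_one] at hlim
    have hall : ∀ m : ℕ, |a k| * (((m:ℝ)+1)/((m:ℝ)+2)) ≤ lipNorm f := by
      intro m
      have := helem k m
      rwa [show wt (Nat.pair k m) = ((m:ℝ)+1)/((m:ℝ)+2) by
        unfold wt; rw [Nat.unpair_pair]] at this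
    simpa [Real.norm_eq_abs] using le_of_tendsto' hlim hall
  have hlipnorm : lipNorm f = ‖a‖ := le_antisymm hupper hlower
  refine ⟨⟨?_, ⟨‖a‖₊, ?_⟩⟩, hlipnorm, ?_⟩
  · show gg b (φ 0) = 0
    rw [map_zero, gg_zero]
  · apply LipschitzWith.of_dist_le_mul
    intro x y
    rw [Real.dist_eq, coe_nnnorm]
    exact flip x y
  intro ha
  have hapos : (0:ℝ) < ‖a‖ := norm_pos_iff.2 ha
  constructor
  · rintro ⟨p, hp⟩
    set N := ⌈|φ p|⌉₊ with hNdef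
    have hN : φ p ≤ blk N := by
      have h1 : φ p ≤ |φ p| := le_abs_self _
      have h2 : |φ p| ≤ (⌈|φ p|⌉₊ : ℝ) := Nat.le_ceil _
      linarith [nat_le_blk N]
    set δ : ℝ := 1/(2*((N:ℝ)+2)) with hδdef
    have hδpos : 0 < δ := by positivity
    have hδle : δ ≤ 1 := by
      rw [hδdef]
      rw [div_le_one (by positivity)]
      have : (0:ℝ) ≤ (N:ℝ) := Nat.cast_nonneg N
      linarith
    have hbound : ∀ r ∈ {r : ℝ | ∃ q : X, q ≠ p ∧ r = |f p - f q| / dist p q},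
        r ≤ (1 - δ) * ‖a‖ := by
      rintro r ⟨q, hq, rfl⟩
      have hmin : min (φ q) (φ p) ≤ blk N := le_trans (min_le_right _ _) hN
      have h := master b ‖a‖ hb N hmin
      have h2 : |f p - f q| ≤ (1 - δ) * ‖a‖ * dist p q := by
        calc |f p - f q| = |gg b (φ p) - gg b (φ q)| := rfl
          _ ≤ (1 - δ) * ‖a‖ * |φ p - φ q| := h
          _ ≤ (1 - δ) * ‖a‖ * dist p q := by
              refine mul_le_mul_of_nonneg_left (hφlip p q) ?_
              nlinarith
      rw [div_le_iff₀ (dist_pos.2 (Ne.symm hq))]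
      exact h2
    have hsup : sSup {r : ℝ | ∃ q : X, q ≠ p ∧ r = |f p - f q| / dist p q}
        ≤ (1 - δ) * ‖a‖ := Real.sSup_le hbound (by nlinarith)
    rw [hp, hlipnorm] at hsup
    nlinarith
  · rintro ⟨xbar, u, z, hu, hz, p, q, hne, hratio, hdir, htendp, htendq⟩
    rw [hlipnorm] at hz
    set N := ⌈|φ xbar|⌉₊ + 1 with hNdef
    have hN : φ xbar < blk N := by
      have h1 : φ xbar ≤ |φ xbar| := le_abs_self _
      have h2 : |φ xbar| ≤ (⌈|φ xbar|⌉₊ : ℝ) := Nat.le_ceil _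
      have h3 : ((⌈|φ xbar|⌉₊ : ℕ) : ℝ) + 1 ≤ blk N := by
        have := nat_le_blk N
        rw [hNdef] at this ⊢
        push_cast at this ⊢
        linarith
      linarith
    set δ : ℝ := 1/(2*((N:ℝ)+2)) with hδdef
    have hδpos : 0 < δ := by positivity
    have htendφ : Filter.Tendsto (fun n => φ (p n)) atTop (nhds (φ xbar)) :=
      (φ.continuous.tendsto xbar).comp htendp
    have hev : ∀ᶠ n in atTop, φ (p n) < blk N := htendφ.eventually_lt_const hN
    have hbound : ∀ᶠ n in atTop,
        |(f (q n) - f (p n)) / ‖q n - p n‖| ≤ (1 - δ) * ‖a‖ := by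
      refine hev.mono fun n hn => ?_
      have hmin : min (φ (p n)) (φ (q n)) ≤ blk N :=
        le_trans (min_le_left _ _) (le_of_lt hn)
      have h := master b ‖a‖ hb N hmin
      have hnormpos : (0:ℝ) < ‖q n - p n‖ :=
        norm_pos_iff.2 (sub_ne_zero.2 (Ne.symm (hne n)))
      have h2 : |f (q n) - f (p n)| ≤ (1 - δ) * ‖a‖ * ‖q n - p n‖ := by
        calc |f (q n) - f (p n)| = |gg b (φ (q n)) - gg b (φ (p n))| := rfl
          _ ≤ (1 - δ) * ‖a‖ * |φ (q n) - φ (p n)| := h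
          _ ≤ (1 - δ) * ‖a‖ * ‖q n - p n‖ := by
              refine mul_le_mul_of_nonneg_left ?_ ?_
              · rw [← dist_eq_norm]
                exact hφlip (q n) (p n)
              · have hδle : δ ≤ 1 := by
                  rw [hδdef, div_le_one (by positivity)]
                  have : (0:ℝ) ≤ (N:ℝ) := Nat.cast_nonneg N
                  linarith
                nlinarith
      rw [abs_div, abs_of_pos hnormpos, div_le_iff₀ hnormpos]
      exact h2
    have hzle : |z| ≤ (1 - δ) * ‖a‖ := le_of_tendsto hratio.abs hbound
    rw [hz] at hzle
    nlinarith
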